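/- Let a_1,…,a_r and b_1,…,b_s be positive integers such that Σ_i ⌊a_i x⌋ - Σ_j ⌊b_j x⌋ ≥ 0 for all real x ≥ 0. Then the rational function [a_1]!_q ⋯ [a_r]!_q / ([b_1]!_q ⋯ [b_s]!_q) is a polynomial with integer coefficients. -/

import Mathlib

open Polynomial

/-- The `q`-factorial `[n]! = ∏_{i=1}^n (1 + q + ⋯ + q^{i-1})` as a polynomial over `ℤ`. -/
noncomputable def qFactorial (n : ℕ) : Polynomial ℤ :=
  ∏ i ∈ Finset.range n, ∑ j ∈ Finset.range (i + 1), X ^ j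

open Finset in
lemma qFactorial_eq_prod_cyclotomic (n : ℕ) :
    qFactorial n = ∏ d ∈ Finset.Ioc 1 n, (cyclotomic d ℤ) ^ (n / d) := by
  rcases Nat.eq_zero_or_pos n with rfl | hn
  · simp [qFactorial]
  have hX : ((X : Polynomial ℤ) - 1) ≠ 0 := fun hXe => by
    simpa using congrArg (Polynomial.eval 0) hXe
  apply mul_left_cancel₀ (pow_ne_zero n hX)
  calc ((X : Polynomial ℤ) - 1) ^ n * qFactorial n
      = ∏ k ∈ range n, ((X - 1) * ∑ j ∈ range (k + 1), X ^ j) := by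
        rw [qFactorial, prod_mul_distrib, prod_const, card_range]
    _ = ∏ k ∈ range n, ((X : Polynomial ℤ) ^ (k + 1) - 1) := by
        refine prod_congr rfl fun k _ => ?_
        rw [mul_comm, geom_sum_mul]
    _ = ∏ k ∈ Ioc 0 n, ((X : Polynomial ℤ) ^ k - 1) := by
        refine prod_nbij' (· + 1) (· - 1) (fun k hk => ?_) (fun k hk => ?_)
          (fun k hk => ?_) (fun k hk => ?_) (fun k hk => rfl)
        · simp only [mem_range] at hk
          simp [Nat.succ_le_of_lt hk]
        · simp only [mem_Ioc] at hk
          simp only [mem_range]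
          omega
        · simp
        · simp only [mem_Ioc] at hk
          omega
    _ = ∏ k ∈ Ioc 0 n, ∏ d ∈ k.divisors, cyclotomic d ℤ := by
        refine prod_congr rfl fun k hk => ?_
        rw [prod_cyclotomic_eq_X_pow_sub_one (mem_Ioc.mp hk).1]
    _ = ∏ d ∈ Ioc 0 n, ∏ _k ∈ (Ioc 0 n).filter (d ∣ ·), cyclotomic d ℤ := by
        refine prod_comm' fun k d => ?_
        simp only [mem_Ioc, Nat.mem_divisors, mem_filter]
        constructor
        · rintro ⟨⟨hk0, hkn⟩, hdk, -⟩
          exact ⟨⟨⟨hk0, hkn⟩, hdk⟩, Nat.pos_of_dvd_of_pos hdk hk0,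
            le_trans (Nat.le_of_dvd hk0 hdk) hkn⟩
        · rintro ⟨⟨⟨hk0, hkn⟩, hdk⟩, -, -⟩
          exact ⟨⟨hk0, hkn⟩, hdk, hk0.ne'⟩
    _ = ∏ d ∈ Ioc 0 n, cyclotomic d ℤ ^ (n / d) := by
        refine prod_congr rfl fun d _ => ?_
        rw [prod_const, Nat.Ioc_filter_dvd_card_eq_div]
    _ = ((X : Polynomial ℤ) - 1) ^ n * ∏ d ∈ Ioc 1 n, cyclotomic d ℤ ^ (n / d) := by
        rw [← Finset.Icc_add_one_left_eq_Ioc, show (0 : ℕ) + 1 = 1 from rfl,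
          Finset.Icc_eq_cons_Ioc hn, prod_cons, cyclotomic_one, Nat.div_one]

open Finset in
lemma prod_qFactorial_eq {m : ℕ} (c : Fin m → ℕ) (N : ℕ) (hc : ∀ i, c i ≤ N) :
    ∏ i, qFactorial (c i) = ∏ d ∈ Finset.Ioc 1 N, (cyclotomic d ℤ) ^ (∑ i, c i / d) := by
  have h1 : ∀ i : Fin m, qFactorial (c i) = ∏ d ∈ Ioc 1 N, cyclotomic d ℤ ^ (c i / d) := by
    intro i
    rw [qFactorial_eq_prod_cyclotomic]
    refine Finset.prod_subset (Finset.Ioc_subset_Ioc_right (hc i)) fun d hd hnd => ?_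
    have hlt : c i < d := by
      simp only [mem_Ioc] at hd hnd
      omega
    rw [Nat.div_eq_of_lt hlt, pow_zero]
  simp_rw [h1]
  rw [Finset.prod_comm]
  exact prod_congr rfl fun d _ => (prod_pow_eq_pow_sum _ _ _)

theorem q_landau (r s : ℕ) (a : Fin r → ℕ) (b : Fin s → ℕ)
    (ha : ∀ i, 0 < a i) (hb : ∀ j, 0 < b j)
    (h : ∀ x : ℝ, 0 ≤ x → ∑ j, ⌊(b j : ℝ) * x⌋ ≤ ∑ i, ⌊(a i : ℝ) * x⌋) :
    (∏ j, qFactorial (b j)) ∣ ∏ i, qFactorial (a i) := by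
  set N := (∑ i, a i) + (∑ j, b j) with hNdef
  have hA : ∀ i, a i ≤ N := fun i =>
    le_trans (Finset.single_le_sum (fun _ _ => Nat.zero_le _) (Finset.mem_univ i))
      (Nat.le_add_right _ _)
  have hB : ∀ j, b j ≤ N := fun j =>
    le_trans (Finset.single_le_sum (fun _ _ => Nat.zero_le _) (Finset.mem_univ j))
      (Nat.le_add_left _ _)
  rw [prod_qFactorial_eq a N hA, prod_qFactorial_eq b N hB]
  refine Finset.prod_dvd_prod_of_dvd _ _ fun d hd => pow_dvd_pow _ ?_
  have hd0 : 0 < d := lt_trans one_pos (Finset.mem_Ioc.mp hd).1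
  have key : ∀ c : ℕ, ⌊(c : ℝ) * (1 / (d : ℝ))⌋ = ((c / d : ℕ) : ℤ) := by
    intro c
    have hcast : ((c : ℝ) * (1 / (d : ℝ))) = (((c : ℚ) / (d : ℚ) : ℚ) : ℝ) := by
      push_cast; ring
    rw [hcast, Rat.floor_cast]
    exact_mod_cast Rat.floor_natCast_div_natCast c d
  have hh := h (1 / (d : ℝ)) (by positivity)
  simp_rw [key] at hh
  exact_mod_cast hh
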